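/- Let Ω ⊆ ℝⁿ be open. Every Borel set A ⊆ Ω is capacitable for the relative (p(·),ϑ)-capacity: cap_{p,ϑ}(A,Ω) = inf { cap_{p,ϑ}(U,Ω) : U open, A ⊆ U ⊆ Ω } = sup { cap_{p,ϑ}(K,Ω) : K ⊆ A compact }. -/

import Mathlib

open MeasureTheory Metric Set Filter ENNReal

noncomputable section

/-- The weighted variable exponent modular `ρ_{p,ϑ,A}(g) = ∫_A |g|^{p(x)} ϑ(x) dx`. -/
def rhoMod {n : ℕ} (p ϑ : EuclideanSpace ℝ (Fin n) → ℝ)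
    (A : Set (EuclideanSpace ℝ (Fin n))) (g : EuclideanSpace ℝ (Fin n) → ℝ) : ℝ≥0∞ :=
  ∫⁻ x in A, ENNReal.ofReal (|g x| ^ p x * ϑ x)

/-- Relative `(p(·),ϑ)`-capacity of a compact set `K` with respect to an open set `Ω`:
the infimum of `ρ_{p,ϑ,Ω}(‖Df‖)` over `C¹` functions with compact support contained in `Ω`
which are `≥ 1` on `K` (with `sInf ∅ = ∞`). -/
def relCapK {n : ℕ} (p ϑ : EuclideanSpace ℝ (Fin n) → ℝ)
    (K Ω : Set (EuclideanSpace ℝ (Fin n))) : ℝ≥0∞ :=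
  sInf ((fun f => rhoMod p ϑ Ω fun x => ‖fderiv ℝ f x‖) ''
    {f : EuclideanSpace ℝ (Fin n) → ℝ |
      ContDiff ℝ 1 f ∧ IsCompact (tsupport f) ∧ tsupport f ⊆ Ω ∧ ∀ x ∈ K, 1 ≤ f x})

/-- Relative capacity of an open subset `U ⊆ Ω`. -/
def relCapO {n : ℕ} (p ϑ : EuclideanSpace ℝ (Fin n) → ℝ)
    (U Ω : Set (EuclideanSpace ℝ (Fin n))) : ℝ≥0∞ :=
  ⨆ (K : Set (EuclideanSpace ℝ (Fin n))) (_ : IsCompact K ∧ K ⊆ U), relCapK p ϑ K Ω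

/-- Relative capacity of an arbitrary subset `A ⊆ Ω`. -/
def relCap {n : ℕ} (p ϑ : EuclideanSpace ℝ (Fin n) → ℝ)
    (A Ω : Set (EuclideanSpace ℝ (Fin n))) : ℝ≥0∞ :=
  ⨅ (U : Set (EuclideanSpace ℝ (Fin n))) (_ : IsOpen U ∧ A ⊆ U ∧ U ⊆ Ω), relCapO p ϑ U Ω

/-- The Sobolev `(p(·),ϑ)`-capacity of `A ⊆ ℝⁿ`. -/
def sobCap {n : ℕ} (p ϑ : EuclideanSpace ℝ (Fin n) → ℝ)
    (A : Set (EuclideanSpace ℝ (Fin n))) : ℝ≥0∞ :=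
  sInf ((fun f => ∫⁻ x, ENNReal.ofReal ((|f x| ^ p x + ‖fderiv ℝ f x‖ ^ p x) * ϑ x)) ''
    {f : EuclideanSpace ℝ (Fin n) → ℝ |
      ContDiff ℝ 1 f ∧ ∃ U, IsOpen U ∧ A ⊆ U ∧ ∀ x ∈ U, 1 ≤ f x})

/-- The weighted measure `μ_ϑ(A) = ∫_A ϑ(x) dx`. -/
def muW {n : ℕ} (ϑ : EuclideanSpace ℝ (Fin n) → ℝ)
    (A : Set (EuclideanSpace ℝ (Fin n))) : ℝ≥0∞ :=
  ∫⁻ x in A, ENNReal.ofReal (ϑ x)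

/-- `μ_ϑ` is doubling with constant `cd`. -/
def DoublingW {n : ℕ} (ϑ : EuclideanSpace ℝ (Fin n) → ℝ) (cd : ℝ) : Prop :=
  1 ≤ cd ∧ ∀ (x : EuclideanSpace ℝ (Fin n)) (r : ℝ), 0 < r →
    muW ϑ (ball x (2 * r)) ≤ ENNReal.ofReal cd * muW ϑ (ball x r)

/-- Poincaré hypothesis with constant `c` for the weight `ϑ`. -/
def PoincareHyp {n : ℕ} (ϑ : EuclideanSpace ℝ (Fin n) → ℝ) (c : ℝ) : Prop :=
  ∀ Ω : Set (EuclideanSpace ℝ (Fin n)), IsOpen Ω → Bornology.IsBounded Ω →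
    ∀ f : EuclideanSpace ℝ (Fin n) → ℝ, ContDiff ℝ 1 f → IsCompact (tsupport f) →
      tsupport f ⊆ Ω →
      ∫ x in Ω, |f x| * ϑ x ≤ c * diam Ω * ∫ x in Ω, ‖fderiv ℝ f x‖ * ϑ x

/-- Embedding hypothesis `L^{p(·)}_ϑ(Ω) ↪ L¹_ϑ(Ω)` with constants `c₁ Ω`. -/
def EmbeddingHyp {n : ℕ} (p ϑ : EuclideanSpace ℝ (Fin n) → ℝ)
    (c₁ : Set (EuclideanSpace ℝ (Fin n)) → ℝ) : Prop :=
  ∀ Ω : Set (EuclideanSpace ℝ (Fin n)), IsOpen Ω → Bornology.IsBounded Ω →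
    0 < c₁ Ω ∧ ∀ g : EuclideanSpace ℝ (Fin n) → ℝ, Measurable g → 1 ≤ rhoMod p ϑ Ω g →
      (∫⁻ x in Ω, ENNReal.ofReal (|g x| * ϑ x)) ≤ ENNReal.ofReal (c₁ Ω) * rhoMod p ϑ Ω g

/-- The Wiener sum `W^{sum}_{p,ϑ}(A,x₀)`. -/
def wienerSum {n : ℕ} (p ϑ : EuclideanSpace ℝ (Fin n) → ℝ)
    (A : Set (EuclideanSpace ℝ (Fin n))) (x₀ : EuclideanSpace ℝ (Fin n)) : ℝ≥0∞ :=
  ∑' i : ℕ,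
    (relCap p ϑ (A ∩ ball x₀ ((2 : ℝ) ^ (-(i : ℤ)))) (ball x₀ ((2 : ℝ) ^ (1 - (i : ℤ)))) /
        relCap p ϑ (ball x₀ ((2 : ℝ) ^ (-(i : ℤ)))) (ball x₀ ((2 : ℝ) ^ (1 - (i : ℤ))))) ^
      (1 / (p x₀ - 1))

/-- The Wiener type integral `W_{p,ϑ}(A,x₀)`. -/
def wienerInt {n : ℕ} (p ϑ : EuclideanSpace ℝ (Fin n) → ℝ)
    (A : Set (EuclideanSpace ℝ (Fin n))) (x₀ : EuclideanSpace ℝ (Fin n)) : ℝ≥0∞ :=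
  ∫⁻ r in Set.Ioo (0 : ℝ) 1,
    (relCap p ϑ (A ∩ ball x₀ r) (ball x₀ (2 * r)) /
        relCap p ϑ (ball x₀ r) (ball x₀ (2 * r))) ^ (1 / (p x₀ - 1)) / ENNReal.ofReal r

section Aux

variable {n : ℕ} {p ϑ : EuclideanSpace ℝ (Fin n) → ℝ}
  {Ω K K' U V A B : Set (EuclideanSpace ℝ (Fin n))}

lemma relCapK_mono (h : K ⊆ K') : relCapK p ϑ K Ω ≤ relCapK p ϑ K' Ω := by
  apply sInf_le_sInf
  apply Set.image_mono
  rintro f ⟨h1, h2, h3, h4⟩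
  exact ⟨h1, h2, h3, fun x hx => h4 x (h hx)⟩

lemma relCapK_le_of_mem {f : EuclideanSpace ℝ (Fin n) → ℝ} (h1 : ContDiff ℝ 1 f)
    (h2 : IsCompact (tsupport f)) (h3 : tsupport f ⊆ Ω) (h4 : ∀ x ∈ K, 1 ≤ f x) :
    relCapK p ϑ K Ω ≤ rhoMod p ϑ Ω fun x => ‖fderiv ℝ f x‖ :=
  sInf_le ⟨f, ⟨h1, h2, h3, h4⟩, rfl⟩

lemma relCapK_le_relCapO (hK : IsCompact K) (hKU : K ⊆ U) :
    relCapK p ϑ K Ω ≤ relCapO p ϑ U Ω :=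
  le_iSup₂ (f := fun K (_ : IsCompact K ∧ K ⊆ U) => relCapK p ϑ K Ω) K ⟨hK, hKU⟩

lemma relCapO_mono (h : U ⊆ V) : relCapO p ϑ U Ω ≤ relCapO p ϑ V Ω :=
  iSup₂_le fun K hK => relCapK_le_relCapO hK.1 (hK.2.trans h)

lemma relCap_le_relCapO (hU : IsOpen U) (hAU : A ⊆ U) (hUΩ : U ⊆ Ω) :
    relCap p ϑ A Ω ≤ relCapO p ϑ U Ω :=
  iInf₂_le U ⟨hU, hAU, hUΩ⟩

lemma relCap_mono (h : A ⊆ B) : relCap p ϑ A Ω ≤ relCap p ϑ B Ω :=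
  le_iInf₂ fun U hU => relCap_le_relCapO hU.1 (h.trans hU.2.1) hU.2.2

private lemma key_rpow {a b μ r P s : ℝ} (ha : 0 ≤ a) (hb : 0 ≤ b) (hμ0 : 0 ≤ μ)
    (hμ1 : μ ≤ 1) (hr : 1 ≤ r) (hrP : r ≤ P) (hs : 1 ≤ s) :
    (s * (μ * a + (1 - μ) * b)) ^ r + ((1 - μ) * a + μ * b) ^ r
      ≤ s ^ P * (a ^ r + b ^ r) := by
  have h1μ : 0 ≤ 1 - μ := by linarith
  have hs0 : 0 ≤ s := by linarith
  have hy : 0 ≤ μ * a + (1 - μ) * b := by positivity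
  have hy' : 0 ≤ (1 - μ) * a + μ * b := by positivity
  have hsP : (1 : ℝ) ≤ s ^ P := by
    calc (1 : ℝ) = s ^ (0 : ℝ) := (Real.rpow_zero s).symm
    _ ≤ s ^ P := Real.rpow_le_rpow_of_exponent_le hs (by linarith)
  have hsr : s ^ r ≤ s ^ P := Real.rpow_le_rpow_of_exponent_le hs hrP
  have conv := convexOn_rpow hr
  have c1 : (μ * a + (1 - μ) * b) ^ r ≤ μ * a ^ r + (1 - μ) * b ^ r := by
    have := conv.2 (Set.mem_Ici.2 ha) (Set.mem_Ici.2 hb) hμ0 h1μ (by ring)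
    simpa [smul_eq_mul] using this
  have c2 : ((1 - μ) * a + μ * b) ^ r ≤ (1 - μ) * a ^ r + μ * b ^ r := by
    have := conv.2 (Set.mem_Ici.2 ha) (Set.mem_Ici.2 hb) h1μ hμ0 (by ring)
    simpa [smul_eq_mul] using this
  have harn : 0 ≤ a ^ r := Real.rpow_nonneg ha r
  have hbrn : 0 ≤ b ^ r := Real.rpow_nonneg hb r
  have e1 : (s * (μ * a + (1 - μ) * b)) ^ r = s ^ r * (μ * a + (1 - μ) * b) ^ r :=
    Real.mul_rpow hs0 hy
  have t1 : (s * (μ * a + (1 - μ) * b)) ^ r ≤ s ^ P * (μ * a ^ r + (1 - μ) * b ^ r) := by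
    rw [e1]
    calc s ^ r * (μ * a + (1 - μ) * b) ^ r ≤ s ^ P * (μ * a + (1 - μ) * b) ^ r := by
          apply mul_le_mul_of_nonneg_right hsr (Real.rpow_nonneg hy r)
    _ ≤ s ^ P * (μ * a ^ r + (1 - μ) * b ^ r) := by
          apply mul_le_mul_of_nonneg_left c1 (by linarith)
  have t2 : ((1 - μ) * a + μ * b) ^ r ≤ s ^ P * ((1 - μ) * a ^ r + μ * b ^ r) := by
    calc ((1 - μ) * a + μ * b) ^ r ≤ (1 - μ) * a ^ r + μ * b ^ r := c2
    _ ≤ s ^ P * ((1 - μ) * a ^ r + μ * b ^ r) := by nlinarith [mul_nonneg h1μ harn, mul_nonneg hμ0 hbrn]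
  calc (s * (μ * a + (1 - μ) * b)) ^ r + ((1 - μ) * a + μ * b) ^ r
      ≤ s ^ P * (μ * a ^ r + (1 - μ) * b ^ r) + s ^ P * ((1 - μ) * a ^ r + μ * b ^ r) :=
        add_le_add t1 t2
  _ = s ^ P * (a ^ r + b ^ r) := by ring

set_option maxHeartbeats 2000000 in
private lemma strong_subadd {P : ℝ} (hpmeas : Measurable p)
    (hae : ∀ᵐ x ∂(volume : Measure (EuclideanSpace ℝ (Fin n))), 1 ≤ p x ∧ p x ≤ P)
    (hϑm : AEMeasurable ϑ (volume : Measure (EuclideanSpace ℝ (Fin n))))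
    (hϑnn : ∀ x, 0 ≤ ϑ x) (K₁ K₂ : Set (EuclideanSpace ℝ (Fin n))) :
    relCapK p ϑ (K₁ ∪ K₂) Ω + relCapK p ϑ (K₁ ∩ K₂) Ω
      ≤ relCapK p ϑ K₁ Ω + relCapK p ϑ K₂ Ω := by
  by_cases h1 : relCapK p ϑ K₁ Ω = ∞
  · simp [h1]
  by_cases h2 : relCapK p ϑ K₂ Ω = ∞
  · simp [h2]
  set Y := relCapK p ϑ K₁ Ω + relCapK p ϑ K₂ Ω with hY
  have hYfin : Y ≠ ∞ := by simp [hY, ENNReal.add_eq_top, h1, h2]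
  have main : ∀ δ : ℝ, δ ∈ Set.Ioo (0:ℝ) 1 →
      relCapK p ϑ (K₁ ∪ K₂) Ω + relCapK p ϑ (K₁ ∩ K₂) Ω
        ≤ ENNReal.ofReal ((1 - δ/2)⁻¹ ^ P * (Y.toReal + 2*δ)) := by
    rintro δ ⟨hδ0, hδ1⟩
    have hδ2 : (0:ℝ) < 1 - δ/2 := by linarith
    set s : ℝ := (1 - δ/2)⁻¹ with hsdef
    have hs0 : 0 < s := inv_pos.2 hδ2
    have hmul1 : (1 - δ/2) * s = 1 := mul_inv_cancel₀ (ne_of_gt hδ2)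
    have hs1 : 1 ≤ s := by nlinarith
    -- choose near-optimal admissible functions
    have hamount : ∀ (K : Set (EuclideanSpace ℝ (Fin n))), relCapK p ϑ K Ω ≠ ∞ →
        ∃ f : EuclideanSpace ℝ (Fin n) → ℝ, (ContDiff ℝ 1 f ∧ IsCompact (tsupport f) ∧
          tsupport f ⊆ Ω ∧ ∀ x ∈ K, 1 ≤ f x) ∧
          rhoMod p ϑ Ω (fun x => ‖fderiv ℝ f x‖) < relCapK p ϑ K Ω + ENNReal.ofReal δ := by
      intro K hK
      have hlt : relCapK p ϑ K Ω < relCapK p ϑ K Ω + ENNReal.ofReal δ :=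
        ENNReal.lt_add_right hK (ne_of_gt (ENNReal.ofReal_pos.2 hδ0))
      conv at hlt => lhs; rw [relCapK]
      obtain ⟨v, ⟨f, hf, rfl⟩, hv⟩ := sInf_lt_iff.1 hlt
      exact ⟨f, hf, hv⟩
    obtain ⟨f₁, ⟨hf₁c, hf₁supc, hf₁supΩ, hf₁K⟩, hρ₁⟩ := hamount K₁ h1
    obtain ⟨f₂, ⟨hf₂c, hf₂supc, hf₂supΩ, hf₂K⟩, hρ₂⟩ := hamount K₂ h2
    -- smooth max / min construction
    set w : EuclideanSpace ℝ (Fin n) → ℝ :=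
      fun x => (f₁ x - f₂ x) * (f₁ x - f₂ x) + δ * δ with hwdef
    have hwpos : ∀ x, 0 < w x := fun x => by
      simp only [hwdef]
      have := mul_self_nonneg (f₁ x - f₂ x); nlinarith
    set q : EuclideanSpace ℝ (Fin n) → ℝ := fun x => Real.sqrt (w x) with hqdef
    have hqpos : ∀ x, 0 < q x := fun x => Real.sqrt_pos.2 (hwpos x)
    have habsle : ∀ x, |f₁ x - f₂ x| ≤ q x := by
      intro x
      calc |f₁ x - f₂ x| = Real.sqrt ((f₁ x - f₂ x) * (f₁ x - f₂ x)) :=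
            (Real.sqrt_mul_self_eq_abs _).symm
      _ ≤ Real.sqrt (w x) := Real.sqrt_le_sqrt (by simp only [hwdef]; nlinarith)
    have hqle : ∀ x, q x ≤ |f₁ x - f₂ x| + δ := by
      intro x
      have habs := abs_mul_abs_self (f₁ x - f₂ x)
      have h' : w x ≤ (|f₁ x - f₂ x| + δ) * (|f₁ x - f₂ x| + δ) := by
        simp only [hwdef]
        nlinarith [abs_nonneg (f₁ x - f₂ x)]
      calc q x ≤ Real.sqrt ((|f₁ x - f₂ x| + δ) * (|f₁ x - f₂ x| + δ)) :=
            Real.sqrt_le_sqrt h'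
      _ = |f₁ x - f₂ x| + δ := Real.sqrt_mul_self (by positivity)
    set g : EuclideanSpace ℝ (Fin n) → ℝ := fun x => (f₁ x + f₂ x + q x - δ) * (s/2) with hgdef
    set m : EuclideanSpace ℝ (Fin n) → ℝ := fun x => (f₁ x + f₂ x - q x + δ) * (1/2) with hmdef
    have hwc : ContDiff ℝ 1 w := ((hf₁c.sub hf₂c).mul (hf₁c.sub hf₂c)).add contDiff_const
    have hqc : ContDiff ℝ 1 q := by
      rw [contDiff_iff_contDiffAt]
      intro x
      exact (Real.contDiffAt_sqrt (ne_of_gt (hwpos x))).comp x hwc.contDiffAt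
    have hgc : ContDiff ℝ 1 g := (((hf₁c.add hf₂c).add hqc).sub contDiff_const).mul contDiff_const
    have hmc : ContDiff ℝ 1 m := (((hf₁c.add hf₂c).sub hqc).add contDiff_const).mul contDiff_const
    have hzero : ∀ x, x ∉ tsupport f₁ ∪ tsupport f₂ → f₁ x = 0 ∧ f₂ x = 0 := by
      intro x hx
      exact ⟨image_eq_zero_of_notMem_tsupport fun h => hx (Or.inl h),
             image_eq_zero_of_notMem_tsupport fun h => hx (Or.inr h)⟩
    have hqδ : ∀ x, x ∉ tsupport f₁ ∪ tsupport f₂ → q x = δ := by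
      intro x hx
      obtain ⟨e1, e2⟩ := hzero x hx
      show Real.sqrt (w x) = δ
      rw [show w x = δ * δ by rw [hwdef]; simp [e1, e2]]
      exact Real.sqrt_mul_self hδ0.le
    have hgsup0 : Function.support g ⊆ tsupport f₁ ∪ tsupport f₂ := by
      intro x hx
      by_contra hxx
      obtain ⟨e1, e2⟩ := hzero x hxx
      exact hx (by show (f₁ x + f₂ x + q x - δ) * (s/2) = 0; rw [hqδ x hxx, e1, e2]; ring)
    have hmsup0 : Function.support m ⊆ tsupport f₁ ∪ tsupport f₂ := by
      intro x hx
      by_contra hxx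
      obtain ⟨e1, e2⟩ := hzero x hxx
      exact hx (by show (f₁ x + f₂ x - q x + δ) * (1/2) = 0; rw [hqδ x hxx, e1, e2]; ring)
    have hclosed : IsClosed (tsupport f₁ ∪ tsupport f₂) :=
      (isClosed_tsupport f₁).union (isClosed_tsupport f₂)
    have hgsup : tsupport g ⊆ tsupport f₁ ∪ tsupport f₂ := closure_minimal hgsup0 hclosed
    have hmsup : tsupport m ⊆ tsupport f₁ ∪ tsupport f₂ := closure_minimal hmsup0 hclosed
    have hgcomp : IsCompact (tsupport g) :=
      (hf₁supc.union hf₂supc).of_isClosed_subset (isClosed_tsupport g) hgsup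
    have hmcomp : IsCompact (tsupport m) :=
      (hf₁supc.union hf₂supc).of_isClosed_subset (isClosed_tsupport m) hmsup
    have hgΩ : tsupport g ⊆ Ω := hgsup.trans (Set.union_subset hf₁supΩ hf₂supΩ)
    have hmΩ : tsupport m ⊆ Ω := hmsup.trans (Set.union_subset hf₁supΩ hf₂supΩ)
    have hone : (2 - δ) * (s/2) = 1 := by
      calc (2 - δ) * (s/2) = (1 - δ/2) * s := by ring
      _ = 1 := hmul1
    have hgone : ∀ x ∈ K₁ ∪ K₂, 1 ≤ g x := by
      rintro x (hx | hx)
      · have h4 := hf₁K x hx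
        have hq1 : f₁ x - f₂ x ≤ q x := (le_abs_self _).trans (habsle x)
        have hkey : 2 - δ ≤ f₁ x + f₂ x + q x - δ := by linarith
        have : (2 - δ) * (s/2) ≤ g x :=
          mul_le_mul_of_nonneg_right hkey (by positivity)
        linarith
      · have h4 := hf₂K x hx
        have hq1 : f₂ x - f₁ x ≤ q x := by
          have : f₂ x - f₁ x ≤ |f₁ x - f₂ x| := by rw [abs_sub_comm]; exact le_abs_self _
          linarith [habsle x]
        have hkey : 2 - δ ≤ f₁ x + f₂ x + q x - δ := by linarith
        have : (2 - δ) * (s/2) ≤ g x :=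
          mul_le_mul_of_nonneg_right hkey (by positivity)
        linarith
    have hmone : ∀ x ∈ K₁ ∩ K₂, 1 ≤ m x := by
      rintro x ⟨hx1, hx2⟩
      have h41 := hf₁K x hx1
      have h42 := hf₂K x hx2
      have hle := hqle x
      have hm2 : 2 ≤ f₁ x + f₂ x - q x + δ := by
        rcases abs_cases (f₁ x - f₂ x) with ⟨he, _⟩ | ⟨he, _⟩ <;> linarith
      show 1 ≤ (f₁ x + f₂ x - q x + δ) * (1/2)
      linarith
    -- pointwise gradient estimate
    have hptwise : ∀ x, 1 ≤ p x → p x ≤ P →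
        |‖fderiv ℝ g x‖| ^ p x * ϑ x + |‖fderiv ℝ m x‖| ^ p x * ϑ x
          ≤ (s ^ P * (|‖fderiv ℝ f₁ x‖| ^ p x + |‖fderiv ℝ f₂ x‖| ^ p x)) * ϑ x := by
      intro x hpx1 hpxP
      simp only [abs_norm]
      set D₁ := fderiv ℝ f₁ x with hD₁
      set D₂ := fderiv ℝ f₂ x with hD₂
      set u : ℝ := f₁ x - f₂ x with hu
      set lam : ℝ := u / q x with hlamdef
      set μ : ℝ := (1 + lam)/2 with hμdef
      have h₁ : HasFDerivAt f₁ D₁ x := (hf₁c.differentiable one_ne_zero x).hasFDerivAt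
      have h₂ : HasFDerivAt f₂ D₂ x := (hf₂c.differentiable one_ne_zero x).hasFDerivAt
      have hu' : HasFDerivAt (fun y => f₁ y - f₂ y) (D₁ - D₂) x := h₁.sub h₂
      have hw' : HasFDerivAt w (u • (D₁ - D₂) + u • (D₁ - D₂)) x := by
        have := (hu'.mul hu').add_const (δ*δ)
        exact this
      have hq' : HasFDerivAt q
          ((1 / (2 * Real.sqrt (w x))) • (u • (D₁ - D₂) + u • (D₁ - D₂))) x :=
        (Real.hasDerivAt_sqrt (ne_of_gt (hwpos x))).comp_hasFDerivAt x hw'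
      have hsimp : (1 / (2 * Real.sqrt (w x))) • (u • (D₁ - D₂) + u • (D₁ - D₂))
          = lam • (D₁ - D₂) := by
        rw [← add_smul, smul_smul, hlamdef]
        congr 1
        have hqx : Real.sqrt (w x) = q x := rfl
        rw [hqx]
        have := (hqpos x).ne'
        field_simp
        ring
      rw [hsimp] at hq'
      have hgd : HasFDerivAt g ((s/2) • (D₁ + D₂ + lam • (D₁ - D₂))) x :=
        (((h₁.add h₂).add hq').sub_const δ).mul_const (s/2)
      have hmd : HasFDerivAt m ((1/2 : ℝ) • (D₁ + D₂ - lam • (D₁ - D₂))) x :=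
        (((h₁.add h₂).sub hq').add_const δ).mul_const (1/2)
      have hlamabs : |lam| ≤ 1 := by
        rw [hlamdef, abs_div, abs_of_pos (hqpos x)]
        exact (div_le_one (hqpos x)).2 (habsle x)
      have hlam' := abs_le.1 hlamabs
      have hμ0 : 0 ≤ μ := by rw [hμdef]; linarith [hlam'.1]
      have hμ1 : μ ≤ 1 := by rw [hμdef]; linarith [hlam'.2]
      have hEg : (s/2) • (D₁ + D₂ + lam • (D₁ - D₂)) = (s*μ) • D₁ + (s*(1-μ)) • D₂ := by
        rw [hμdef]; module
      have hEm : (1/2 : ℝ) • (D₁ + D₂ - lam • (D₁ - D₂)) = (1-μ) • D₁ + μ • D₂ := by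
        rw [hμdef]; module
      have hga : ‖fderiv ℝ g x‖ ≤ s * (μ * ‖D₁‖ + (1-μ) * ‖D₂‖) := by
        rw [hgd.fderiv, hEg]
        calc ‖(s*μ) • D₁ + (s*(1-μ)) • D₂‖ ≤ ‖(s*μ) • D₁‖ + ‖(s*(1-μ)) • D₂‖ :=
              norm_add_le _ _
        _ = (s*μ) * ‖D₁‖ + (s*(1-μ)) * ‖D₂‖ := by
              rw [norm_smul, norm_smul, Real.norm_eq_abs, Real.norm_eq_abs,
                abs_of_nonneg (mul_nonneg hs0.le hμ0),
                abs_of_nonneg (mul_nonneg hs0.le (by linarith))]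
        _ = s * (μ * ‖D₁‖ + (1-μ) * ‖D₂‖) := by ring
      have hma : ‖fderiv ℝ m x‖ ≤ (1-μ) * ‖D₁‖ + μ * ‖D₂‖ := by
        rw [hmd.fderiv, hEm]
        calc ‖(1-μ) • D₁ + μ • D₂‖ ≤ ‖(1-μ) • D₁‖ + ‖μ • D₂‖ := norm_add_le _ _
        _ = (1-μ) * ‖D₁‖ + μ * ‖D₂‖ := by
              rw [norm_smul, norm_smul, Real.norm_eq_abs, Real.norm_eq_abs,
                abs_of_nonneg (by linarith : (0:ℝ) ≤ 1 - μ), abs_of_nonneg hμ0]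
      have key := key_rpow (norm_nonneg D₁) (norm_nonneg D₂) hμ0 hμ1 hpx1 hpxP hs1
      have m1 : ‖fderiv ℝ g x‖ ^ p x ≤ (s * (μ * ‖D₁‖ + (1-μ) * ‖D₂‖)) ^ p x :=
        Real.rpow_le_rpow (norm_nonneg _) hga (by linarith)
      have m2 : ‖fderiv ℝ m x‖ ^ p x ≤ ((1-μ) * ‖D₁‖ + μ * ‖D₂‖) ^ p x :=
        Real.rpow_le_rpow (norm_nonneg _) hma (by linarith)
      have hsum : ‖fderiv ℝ g x‖ ^ p x + ‖fderiv ℝ m x‖ ^ p x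
          ≤ s ^ P * (‖D₁‖ ^ p x + ‖D₂‖ ^ p x) := by
        calc ‖fderiv ℝ g x‖ ^ p x + ‖fderiv ℝ m x‖ ^ p x
            ≤ (s * (μ * ‖D₁‖ + (1-μ) * ‖D₂‖)) ^ p x + ((1-μ) * ‖D₁‖ + μ * ‖D₂‖) ^ p x :=
              add_le_add m1 m2
        _ ≤ s ^ P * (‖D₁‖ ^ p x + ‖D₂‖ ^ p x) := key
      calc ‖fderiv ℝ g x‖ ^ p x * ϑ x + ‖fderiv ℝ m x‖ ^ p x * ϑ x
          = (‖fderiv ℝ g x‖ ^ p x + ‖fderiv ℝ m x‖ ^ p x) * ϑ x := by ring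
      _ ≤ (s ^ P * (‖D₁‖ ^ p x + ‖D₂‖ ^ p x)) * ϑ x :=
            mul_le_mul_of_nonneg_right hsum (hϑnn x)
    -- integral estimate
    have measG : ∀ (h : EuclideanSpace ℝ (Fin n) → ℝ), ContDiff ℝ 1 h →
        AEMeasurable (fun x => ENNReal.ofReal (|‖fderiv ℝ h x‖| ^ p x * ϑ x))
          ((volume : Measure (EuclideanSpace ℝ (Fin n))).restrict Ω) := by
      intro h hc
      apply AEMeasurable.restrict
      apply ENNReal.measurable_ofReal.comp_aemeasurable
      exact ((((hc.continuous_fderiv one_ne_zero).norm.abs.measurable).pow hpmeas).aemeasurable).mul hϑm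
    have hae' : ∀ᵐ x ∂((volume : Measure (EuclideanSpace ℝ (Fin n))).restrict Ω),
        ENNReal.ofReal (|‖fderiv ℝ g x‖| ^ p x * ϑ x)
          + ENNReal.ofReal (|‖fderiv ℝ m x‖| ^ p x * ϑ x)
        ≤ ENNReal.ofReal (s ^ P)
          * (ENNReal.ofReal (|‖fderiv ℝ f₁ x‖| ^ p x * ϑ x)
              + ENNReal.ofReal (|‖fderiv ℝ f₂ x‖| ^ p x * ϑ x)) := by
      filter_upwards [ae_restrict_of_ae hae] with x hx
      have hpt := hptwise x hx.1 hx.2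
      have hnn : ∀ t : ℝ, 0 ≤ |t| ^ p x * ϑ x := fun t =>
        mul_nonneg (Real.rpow_nonneg (abs_nonneg t) _) (hϑnn x)
      rw [← ENNReal.ofReal_add (hnn _) (hnn _), ← ENNReal.ofReal_add (hnn _) (hnn _),
        ← ENNReal.ofReal_mul (Real.rpow_nonneg hs0.le P)]
      apply ENNReal.ofReal_le_ofReal
      calc |‖fderiv ℝ g x‖| ^ p x * ϑ x + |‖fderiv ℝ m x‖| ^ p x * ϑ x
          ≤ (s ^ P * (|‖fderiv ℝ f₁ x‖| ^ p x + |‖fderiv ℝ f₂ x‖| ^ p x)) * ϑ x := hpt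
      _ = s ^ P * (|‖fderiv ℝ f₁ x‖| ^ p x * ϑ x + |‖fderiv ℝ f₂ x‖| ^ p x * ϑ x) := by ring
    have hint : rhoMod p ϑ Ω (fun x => ‖fderiv ℝ g x‖) + rhoMod p ϑ Ω (fun x => ‖fderiv ℝ m x‖)
        ≤ ENNReal.ofReal (s ^ P) *
          (rhoMod p ϑ Ω (fun x => ‖fderiv ℝ f₁ x‖) + rhoMod p ϑ Ω (fun x => ‖fderiv ℝ f₂ x‖)) := by
      simp only [rhoMod]
      rw [← lintegral_add_left' (measG g hgc)]
      rw [← lintegral_add_left' (measG f₁ hf₁c)]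
      rw [← lintegral_const_mul' _ _ ENNReal.ofReal_ne_top]
      exact lintegral_mono_ae hae'
    have hg_adm : relCapK p ϑ (K₁ ∪ K₂) Ω ≤ rhoMod p ϑ Ω fun x => ‖fderiv ℝ g x‖ :=
      relCapK_le_of_mem hgc hgcomp hgΩ hgone
    have hm_adm : relCapK p ϑ (K₁ ∩ K₂) Ω ≤ rhoMod p ϑ Ω fun x => ‖fderiv ℝ m x‖ :=
      relCapK_le_of_mem hmc hmcomp hmΩ hmone
    have hsum2 : rhoMod p ϑ Ω (fun x => ‖fderiv ℝ f₁ x‖)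
        + rhoMod p ϑ Ω (fun x => ‖fderiv ℝ f₂ x‖) ≤ ENNReal.ofReal (Y.toReal + 2*δ) := by
      calc rhoMod p ϑ Ω (fun x => ‖fderiv ℝ f₁ x‖) + rhoMod p ϑ Ω (fun x => ‖fderiv ℝ f₂ x‖)
          ≤ (relCapK p ϑ K₁ Ω + ENNReal.ofReal δ) + (relCapK p ϑ K₂ Ω + ENNReal.ofReal δ) :=
            add_le_add hρ₁.le hρ₂.le
      _ = Y + (ENNReal.ofReal δ + ENNReal.ofReal δ) := by rw [hY]; ring
      _ = Y + ENNReal.ofReal (2*δ) := by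
            rw [← ENNReal.ofReal_add hδ0.le hδ0.le]; norm_num [two_mul]
      _ = ENNReal.ofReal (Y.toReal + 2*δ) := by
            rw [ENNReal.ofReal_add ENNReal.toReal_nonneg (by linarith), ENNReal.ofReal_toReal hYfin]
    calc relCapK p ϑ (K₁ ∪ K₂) Ω + relCapK p ϑ (K₁ ∩ K₂) Ω
        ≤ rhoMod p ϑ Ω (fun x => ‖fderiv ℝ g x‖) + rhoMod p ϑ Ω (fun x => ‖fderiv ℝ m x‖) :=
          add_le_add hg_adm hm_adm
    _ ≤ ENNReal.ofReal (s ^ P) *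
          (rhoMod p ϑ Ω (fun x => ‖fderiv ℝ f₁ x‖) + rhoMod p ϑ Ω (fun x => ‖fderiv ℝ f₂ x‖)) := hint
    _ ≤ ENNReal.ofReal (s ^ P) * ENNReal.ofReal (Y.toReal + 2*δ) := mul_le_mul_right hsum2 _
    _ = ENNReal.ofReal (s ^ P * (Y.toReal + 2*δ)) :=
          (ENNReal.ofReal_mul (Real.rpow_nonneg hs0.le P)).symm
  -- pass to the limit δ → 0⁺
  have h0 : ContinuousAt (fun δ : ℝ => (1 - δ/2)⁻¹ ^ P * (Y.toReal + 2*δ)) 0 := by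
    apply ContinuousAt.mul
    · apply ContinuousAt.rpow_const
      · exact (continuousAt_const.sub (continuousAt_id.div_const 2)).inv₀ (by norm_num)
      · left; norm_num
    · exact continuousAt_const.add (continuousAt_const.mul continuousAt_id)
  have hcont : Tendsto (fun δ : ℝ => ENNReal.ofReal ((1 - δ/2)⁻¹ ^ P * (Y.toReal + 2*δ)))
      (nhdsWithin 0 (Set.Ioi 0)) (nhds Y) := by
    have h3 : ContinuousAt (fun δ : ℝ => ENNReal.ofReal ((1 - δ/2)⁻¹ ^ P * (Y.toReal + 2*δ))) 0 :=
      ENNReal.continuous_ofReal.continuousAt.comp h0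
    have hval : ENNReal.ofReal ((1 - (0:ℝ)/2)⁻¹ ^ P * (Y.toReal + 2*0)) = Y := by
      norm_num [Real.one_rpow, ENNReal.ofReal_toReal hYfin]
    have h4 := h3.tendsto
    rw [hval] at h4
    exact h4.mono_left nhdsWithin_le_nhds
  refine ge_of_tendsto hcont ?_
  filter_upwards [Ioo_mem_nhdsGT_of_mem (Set.left_mem_Ico.2 one_pos)] with δ hδ using main δ hδ
private lemma relCapO_strong_subadd {P : ℝ} (hpmeas : Measurable p)
    (hae : ∀ᵐ x ∂(volume : Measure (EuclideanSpace ℝ (Fin n))), 1 ≤ p x ∧ p x ≤ P)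
    (hϑm : AEMeasurable ϑ (volume : Measure (EuclideanSpace ℝ (Fin n))))
    (hϑnn : ∀ x, 0 ≤ ϑ x) (hU : IsOpen U) (hV : IsOpen V) :
    relCapO p ϑ (U ∪ V) Ω + relCapO p ϑ (U ∩ V) Ω
      ≤ relCapO p ϑ U Ω + relCapO p ϑ V Ω := by
  rw [relCapO, relCapO]
  apply ENNReal.biSup_add_biSup_le'
    (p := fun K => IsCompact K ∧ K ⊆ U ∪ V) (q := fun K => IsCompact K ∧ K ⊆ U ∩ V)
  · exact ⟨∅, isCompact_empty, Set.empty_subset _⟩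
  · exact ⟨∅, isCompact_empty, Set.empty_subset _⟩
  intro K hK K' hK'
  obtain ⟨K₁, K₂, hK₁c, hK₂c, hK₁U, hK₂V, hKeq⟩ := hK.1.binary_compact_cover hU hV hK.2
  calc relCapK p ϑ K Ω + relCapK p ϑ K' Ω
      ≤ relCapK p ϑ ((K₁ ∪ K') ∪ (K₂ ∪ K')) Ω + relCapK p ϑ ((K₁ ∪ K') ∩ (K₂ ∪ K')) Ω := by
        apply add_le_add
        · apply relCapK_mono
          rw [hKeq]
          exact Set.union_subset_union Set.subset_union_left Set.subset_union_left
        · apply relCapK_mono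
          exact Set.subset_inter (Set.subset_union_right) (Set.subset_union_right)
  _ ≤ relCapK p ϑ (K₁ ∪ K') Ω + relCapK p ϑ (K₂ ∪ K') Ω :=
        strong_subadd hpmeas hae hϑm hϑnn _ _
  _ ≤ relCapO p ϑ U Ω + relCapO p ϑ V Ω := by
        apply add_le_add
        · exact relCapK_le_relCapO (hK₁c.union hK'.1)
            (Set.union_subset hK₁U (hK'.2.trans Set.inter_subset_left))
        · exact relCapK_le_relCapO (hK₂c.union hK'.1)
            (Set.union_subset hK₂V (hK'.2.trans Set.inter_subset_right))

private lemma cap_iUnion_le {P : ℝ} (hpmeas : Measurable p)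
    (hae : ∀ᵐ x ∂(volume : Measure (EuclideanSpace ℝ (Fin n))), 1 ≤ p x ∧ p x ≤ P)
    (hϑm : AEMeasurable ϑ (volume : Measure (EuclideanSpace ℝ (Fin n))))
    (hϑnn : ∀ x, 0 ≤ ϑ x) (Bs : ℕ → Set (EuclideanSpace ℝ (Fin n)))
    (hmono : Monotone Bs) {t : ℝ≥0∞} (ht : t ≠ ∞)
    (hle : ∀ k, relCap p ϑ (Bs k) Ω ≤ t) :
    relCap p ϑ (⋃ k, Bs k) Ω ≤ t := by
  have hcap_ne : ∀ k, relCap p ϑ (Bs k) Ω ≠ ∞ := fun k => ((hle k).trans_lt (lt_top_iff_ne_top.2 ht)).ne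
  have haux : ∀ ε : ℝ, 0 < ε → relCap p ϑ (⋃ k, Bs k) Ω ≤ t + ENNReal.ofReal ε := by
    intro ε hε
    -- choose good open neighborhoods
    have hch : ∀ k : ℕ, ∃ Uk : Set (EuclideanSpace ℝ (Fin n)),
        (IsOpen Uk ∧ Bs k ⊆ Uk ∧ Uk ⊆ Ω) ∧
        relCapO p ϑ Uk Ω ≤ relCap p ϑ (Bs k) Ω + ENNReal.ofReal (ε / 2^(k+1)) := by
      intro k
      have hpos : (0:ℝ) < ε / 2^(k+1) := by positivity
      have hlt : relCap p ϑ (Bs k) Ω < relCap p ϑ (Bs k) Ω + ENNReal.ofReal (ε / 2^(k+1)) :=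
        ENNReal.lt_add_right (hcap_ne k) (ne_of_gt (ENNReal.ofReal_pos.2 hpos))
      conv at hlt => lhs; rw [relCap]
      obtain ⟨Uk, hUk⟩ := iInf_lt_iff.1 hlt
      obtain ⟨hUk1, hUk2⟩ := iInf_lt_iff.1 hUk
      exact ⟨Uk, hUk1, hUk2.le⟩
    choose Us hUs hUslt using hch
    set Vs : ℕ → Set (EuclideanSpace ℝ (Fin n)) := Set.accumulate Us with hVs
    have hVsopen : ∀ k, IsOpen (Vs k) := fun k => isOpen_biUnion fun i _ => (hUs i).1
    have hVsΩ : ∀ k, Vs k ⊆ Ω := fun k => Set.iUnion₂_subset fun i _ => (hUs i).2.2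
    have hBV : ∀ k, Bs k ⊆ Vs k := fun k => (hUs k).2.1.trans (Set.subset_accumulate)
    set Ss : ℕ → ℝ := fun k => ε - ε / 2^(k+1) with hSs
    have hSs0 : ∀ k, 0 ≤ Ss k := by
      intro k
      have h1 : ε / 2^(k+1) ≤ ε := by
        apply div_le_self hε.le
        exact one_le_pow₀ (by norm_num)
      simp only [hSs]; linarith
    have hSsle : ∀ k, Ss k ≤ ε := by
      intro k
      have : (0:ℝ) < ε / 2^(k+1) := by positivity
      simp only [hSs]; linarith
    -- invariant
    have hInv : ∀ k, relCapO p ϑ (Vs k) Ω ≤ relCap p ϑ (Bs k) Ω + ENNReal.ofReal (Ss k) := by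
      intro k
      induction k with
      | zero =>
        have h0 : Vs 0 = Us 0 := by
          simp [hVs, Set.accumulate_def]
        have hS0 : Ss 0 = ε / 2^(0+1) := by
          simp only [hSs]; norm_num; try linarith
        rw [h0, hS0]
        exact hUslt 0
      | succ k ih =>
        have hacc : Vs (k+1) = Vs k ∪ Us (k+1) := by
          simp only [hVs, Set.accumulate_def]
          ext y
          simp only [Set.mem_iUnion, Set.mem_union, exists_prop]
          constructor
          · rintro ⟨i, hi, hy⟩
            rcases Nat.le_add_one_iff.1 hi with h | rfl
            · exact Or.inl ⟨i, h, hy⟩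
            · exact Or.inr hy
          · rintro (⟨i, hi, hy⟩ | hy)
            · exact ⟨i, hi.trans (Nat.le_succ k), hy⟩
            · exact ⟨k+1, le_rfl, hy⟩
        have hssub := relCapO_strong_subadd (Ω := Ω) hpmeas hae hϑm hϑnn
          (hVsopen k) ((hUs (k+1)).1)
        have hlow : relCap p ϑ (Bs k) Ω ≤ relCapO p ϑ (Vs k ∩ Us (k+1)) Ω := by
          apply relCap_le_relCapO ((hVsopen k).inter (hUs (k+1)).1)
          · exact Set.subset_inter (hBV k) ((hmono (Nat.le_succ k)).trans (hUs (k+1)).2.1)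
          · exact Set.inter_subset_left.trans (hVsΩ k)
        have hchain : relCap p ϑ (Bs k) Ω + relCapO p ϑ (Vs (k+1)) Ω
            ≤ relCap p ϑ (Bs k) Ω +
              (relCap p ϑ (Bs (k+1)) Ω + ENNReal.ofReal (Ss (k+1))) := by
          calc relCap p ϑ (Bs k) Ω + relCapO p ϑ (Vs (k+1)) Ω
              ≤ relCapO p ϑ (Vs k ∩ Us (k+1)) Ω + relCapO p ϑ (Vs (k+1)) Ω :=
                add_le_add_left hlow _
          _ = relCapO p ϑ (Vs k ∪ Us (k+1)) Ω + relCapO p ϑ (Vs k ∩ Us (k+1)) Ω := by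
                rw [← hacc]; ring
          _ ≤ relCapO p ϑ (Vs k) Ω + relCapO p ϑ (Us (k+1)) Ω := hssub
          _ ≤ (relCap p ϑ (Bs k) Ω + ENNReal.ofReal (Ss k)) +
                (relCap p ϑ (Bs (k+1)) Ω + ENNReal.ofReal (ε / 2^(k+2))) :=
                add_le_add ih (hUslt (k+1))
          _ = relCap p ϑ (Bs k) Ω +
                (relCap p ϑ (Bs (k+1)) Ω + (ENNReal.ofReal (Ss k) + ENNReal.ofReal (ε / 2^(k+2)))) := by
                ring
          _ = relCap p ϑ (Bs k) Ω +
                (relCap p ϑ (Bs (k+1)) Ω + ENNReal.ofReal (Ss (k+1))) := by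
                have hSrec : Ss k + ε / 2^(k+2) = Ss (k+1) := by
                  simp only [hSs]
                  rw [pow_succ 2 (k+1)]
                  have hne : (2:ℝ)^(k+1) ≠ 0 := by positivity
                  field_simp
                  ring
                rw [← ENNReal.ofReal_add (hSs0 k) (by positivity), hSrec]
        exact (ENNReal.add_le_add_iff_left (hcap_ne k)).1 hchain
    -- conclude
    have hsub : (⋃ k, Bs k) ⊆ ⋃ k, Vs k := Set.iUnion_mono hBV
    have hVopen : IsOpen (⋃ k, Vs k) := isOpen_iUnion hVsopen
    have hVΩ : (⋃ k, Vs k) ⊆ Ω := Set.iUnion_subset hVsΩ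
    calc relCap p ϑ (⋃ k, Bs k) Ω ≤ relCapO p ϑ (⋃ k, Vs k) Ω :=
          relCap_le_relCapO hVopen hsub hVΩ
    _ ≤ t + ENNReal.ofReal ε := by
        apply iSup₂_le
        rintro K ⟨hKc, hKV⟩
        obtain ⟨sfin, hsfin⟩ := hKc.elim_finite_subcover Vs hVsopen hKV
        have hKVs : K ⊆ Vs (sfin.sup id) := by
          refine hsfin.trans (Set.iUnion₂_subset fun i hi => ?_)
          exact Set.monotone_accumulate (Finset.le_sup (f := id) hi)
        calc relCapK p ϑ K Ω ≤ relCapO p ϑ (Vs (sfin.sup id)) Ω :=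
              relCapK_le_relCapO hKc hKVs
        _ ≤ relCap p ϑ (Bs (sfin.sup id)) Ω + ENNReal.ofReal (Ss (sfin.sup id)) :=
              hInv _
        _ ≤ t + ENNReal.ofReal ε :=
              add_le_add (hle _) (ENNReal.ofReal_le_ofReal (hSsle _))
  apply ENNReal.le_of_forall_pos_le_add
  intro ζ hζ _
  have := haux ζ (by exact_mod_cast hζ)
  rwa [ENNReal.ofReal_coe_nnreal] at this
set_option maxHeartbeats 1000000 in
private lemma exists_compact_le {P : ℝ} (hpmeas : Measurable p)
    (hae : ∀ᵐ x ∂(volume : Measure (EuclideanSpace ℝ (Fin n))), 1 ≤ p x ∧ p x ≤ P)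
    (hϑm : AEMeasurable ϑ (volume : Measure (EuclideanSpace ℝ (Fin n))))
    (hϑnn : ∀ x, 0 ≤ ϑ x) {A : Set (EuclideanSpace ℝ (Fin n))}
    (hA : MeasurableSet A) (hAΩ : A ⊆ Ω) {t : ℝ≥0∞}
    (ht : t < relCap p ϑ A Ω) (htne : t ≠ ∞) :
    ∃ K, IsCompact K ∧ K ⊆ A ∧ t ≤ relCap p ϑ K Ω := by
  have hAn := hA.analyticSet
  rw [MeasureTheory.AnalyticSet] at hAn
  rcases hAn with hempty | ⟨f, hfc, hfr⟩
  · subst hempty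
    exact ⟨∅, isCompact_empty, Set.Subset.rfl, ht.le⟩
  -- inductive step: extend a good finite scheme by one coordinate
  have step : ∀ (σ : ℕ → ℕ) (k : ℕ), t < relCap p ϑ (f '' {x | ∀ i < k, x i ≤ σ i}) Ω →
      ∃ mm : ℕ, t < relCap p ϑ (f '' {x | (∀ i < k, x i ≤ σ i) ∧ x k ≤ mm}) Ω := by
    intro σ k hσ
    by_contra hcon
    push_neg at hcon
    have hmono : Monotone (fun mm : ℕ => f '' {x | (∀ i < k, x i ≤ σ i) ∧ x k ≤ mm}) := by
      intro a b hab
      apply Set.image_mono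
      rintro x ⟨h1, h2⟩
      exact ⟨h1, h2.trans hab⟩
    have hun : (⋃ mm : ℕ, f '' {x | (∀ i < k, x i ≤ σ i) ∧ x k ≤ mm}) =
        f '' {x | ∀ i < k, x i ≤ σ i} := by
      apply Set.Subset.antisymm
      · exact Set.iUnion_subset fun mm => Set.image_mono (fun x hx => hx.1)
      · rintro y ⟨x, hx, rfl⟩
        exact Set.mem_iUnion.2 ⟨x k, Set.mem_image_of_mem f ⟨hx, le_rfl⟩⟩
    have hcap := cap_iUnion_le hpmeas hae hϑm hϑnn _ hmono htne hcon
    rw [hun] at hcap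
    exact absurd hσ (not_lt.2 hcap)
  have hbase : t < relCap p ϑ (f '' {x | ∀ i < 0, x i ≤ (fun _ : ℕ => 0) i}) Ω := by
    have huniv : {x : ℕ → ℕ | ∀ i < 0, x i ≤ (fun _ : ℕ => 0) i} = Set.univ := by
      ext x; simp
    rw [huniv, Set.image_univ, hfr]
    exact ht
  let T : (k : ℕ) → {σ : ℕ → ℕ // t < relCap p ϑ (f '' {x | ∀ i < k, x i ≤ σ i}) Ω} :=
    fun k => Nat.rec
      (motive := fun k => {σ : ℕ → ℕ // t < relCap p ϑ (f '' {x | ∀ i < k, x i ≤ σ i}) Ω})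
      ⟨fun _ => 0, hbase⟩
      (fun k ih =>
        ⟨Function.update ih.1 k (Classical.choose (step ih.1 k ih.2)), by
          have hspec := Classical.choose_spec (step ih.1 k ih.2)
          have heq : {x : ℕ → ℕ | ∀ i < k+1,
                x i ≤ Function.update ih.1 k (Classical.choose (step ih.1 k ih.2)) i}
              = {x : ℕ → ℕ | (∀ i < k, x i ≤ ih.1 i) ∧
                  x k ≤ Classical.choose (step ih.1 k ih.2)} := by
            ext x
            simp only [Set.mem_setOf_eq]
            constructor
            · intro h
              refine ⟨fun i hi => ?_, ?_⟩
              · have h' := h i (hi.trans (Nat.lt_succ_self k))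
                rwa [Function.update_of_ne (Nat.ne_of_lt hi)] at h'
              · have h' := h k (Nat.lt_succ_self k)
                rwa [Function.update_self] at h'
            · rintro ⟨h1, h2⟩ i hi
              rcases Nat.lt_succ_iff_lt_or_eq.1 hi with h | rfl
              · rw [Function.update_of_ne (Nat.ne_of_lt h)]
                exact h1 i h
              · rw [Function.update_self]
                exact h2
          rw [heq]
          exact hspec⟩) k
  set s : ℕ → ℕ := fun i => (T (i+1)).1 i with hsdef
  have hagree : ∀ k i, i < k → (T k).1 i = s i := by
    intro k
    induction k with
    | zero => intro i hi; omega
    | succ k ih =>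
      intro i hi
      rcases Nat.lt_succ_iff_lt_or_eq.1 hi with h | rfl
      · have hTk : (T (k+1)).1 i = (T k).1 i := by
          show Function.update (T k).1 k (Classical.choose (step (T k).1 k (T k).2)) i = (T k).1 i
          exact Function.update_of_ne (Nat.ne_of_lt h) _ _
        rw [hTk]
        exact ih i h
      · rfl
  have hcapk : ∀ k, t < relCap p ϑ (f '' {x | ∀ i < k, x i ≤ s i}) Ω := by
    intro k
    have hket : {x : ℕ → ℕ | ∀ i < k, x i ≤ s i} = {x | ∀ i < k, x i ≤ (T k).1 i} := by
      ext x
      simp only [Set.mem_setOf_eq]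
      constructor
      · intro h i hi; rw [hagree k i hi]; exact h i hi
      · intro h i hi; rw [← hagree k i hi]; exact h i hi
    rw [hket]
    exact (T k).2
  set Kc : Set (EuclideanSpace ℝ (Fin n)) := f '' (Set.univ.pi fun i => Set.Iic (s i)) with hKcdef
  have hKcompact : IsCompact Kc :=
    (isCompact_univ_pi fun i => (Set.finite_Iic (s i)).isCompact).image hfc
  have hKA : Kc ⊆ A := by
    rw [hKcdef, ← hfr]
    exact Set.image_subset_range f _
  refine ⟨Kc, hKcompact, hKA, ?_⟩
  rw [relCap]
  refine le_iInf fun V => le_iInf fun hV => ?_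
  obtain ⟨hVopen, hKV, hVΩ⟩ := hV
  have hexk : ∃ k, f '' {x | ∀ i < k, x i ≤ s i} ⊆ V := by
    by_contra hcon
    push_neg at hcon
    have hxk : ∀ k, ∃ x : ℕ → ℕ, (∀ i < k, x i ≤ s i) ∧ f x ∉ V := by
      intro k
      obtain ⟨y, ⟨x, hx, rfl⟩, hyV⟩ := Set.not_subset.1 (hcon k)
      exact ⟨x, hx, hyV⟩
    choose xs hxs hxsV using hxk
    haveI : (Filter.map xs Filter.atTop).NeBot := Filter.map_neBot
    set F : Ultrafilter (ℕ → ℕ) := Ultrafilter.of (Filter.map xs Filter.atTop) with hF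
    have hFle : (F : Filter (ℕ → ℕ)) ≤ Filter.map xs Filter.atTop := Ultrafilter.of_le _
    have hcoord : ∀ i, {u : ℕ → ℕ | u i ≤ s i} ∈ F := by
      intro i
      apply hFle
      rw [Filter.mem_map]
      exact Filter.mem_of_superset (Filter.mem_atTop (i+1))
        (fun k hk => hxs k i (by exact Nat.lt_of_lt_of_le (Nat.lt_succ_self i) hk))
    have hpure : ∀ i, ∃ a ∈ Set.Iic (s i), F.map (fun u : ℕ → ℕ => u i) = pure a :=
      fun i => Ultrafilter.eq_pure_of_finite_mem (Set.finite_Iic (s i)) (hcoord i)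
    choose a ha hpureeq using hpure
    have htendid : Tendsto (fun u : ℕ → ℕ => u) (F : Filter (ℕ → ℕ)) (nhds a) := by
      apply tendsto_pi_nhds.2
      intro i
      have hcoe : Filter.map (fun u : ℕ → ℕ => u i) (F : Filter (ℕ → ℕ)) = pure (a i) := by
        have h2 := congrArg (fun G : Ultrafilter ℕ => (G : Filter ℕ)) (hpureeq i)
        first
        | exact h2
        | simpa using h2
        | exact_mod_cast h2
      show Filter.map (fun u : ℕ → ℕ => u i) (F : Filter (ℕ → ℕ)) ≤ nhds (a i)
      rw [hcoe]
      exact pure_le_nhds _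
    have htend : Tendsto f (F : Filter (ℕ → ℕ)) (nhds (f a)) :=
      (hfc.continuousAt).tendsto.comp htendid
    have hfaK : f a ∈ Kc := ⟨a, fun i _ => ha i, rfl⟩
    have hmemV : f ⁻¹' V ∈ F := htend (hVopen.mem_nhds (hKV hfaK))
    have hmemVc : (f ⁻¹' V)ᶜ ∈ F := by
      apply hFle
      rw [Filter.mem_map]
      have huniv : xs ⁻¹' (f ⁻¹' V)ᶜ = Set.univ := Set.eq_univ_of_forall fun k => hxsV k
      rw [huniv]
      exact Filter.univ_mem
    exact (Ultrafilter.compl_notMem_iff.2 hmemV) hmemVc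
  obtain ⟨k, hk⟩ := hexk
  have hle := relCap_le_relCapO (p := p) (ϑ := ϑ) (A := f '' {x | ∀ i < k, x i ≤ s i}) hVopen hk hVΩ
  exact le_of_lt (lt_of_lt_of_le (hcapk k) hle)
end Aux

/-- Every Borel subset of `Ω` is capacitable for the relative `(p(·),ϑ)`-capacity. -/
theorem stmt7 (n : ℕ) (hn : 1 ≤ n) (p ϑ : EuclideanSpace ℝ (Fin n) → ℝ)
    (hp : Measurable p)
    (hpm : 1 < essInf p (volume : Measure (EuclideanSpace ℝ (Fin n))))
    (hpb : Filter.IsBoundedUnder (· ≤ ·) (ae (volume : Measure (EuclideanSpace ℝ (Fin n)))) p)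
    (hϑpos : ∀ x, 0 < ϑ x)
    (hϑloc : LocallyIntegrable ϑ (volume : Measure (EuclideanSpace ℝ (Fin n))))
    (Ω A : Set (EuclideanSpace ℝ (Fin n))) (hΩ : IsOpen Ω) (hA : MeasurableSet A) (hAΩ : A ⊆ Ω) :
    relCap p ϑ A Ω =
        (⨅ (U : Set (EuclideanSpace ℝ (Fin n))) (_ : IsOpen U ∧ A ⊆ U ∧ U ⊆ Ω), relCapO p ϑ U Ω) ∧
      relCap p ϑ A Ω =
        ⨆ (K : Set (EuclideanSpace ℝ (Fin n))) (_ : IsCompact K ∧ K ⊆ A), relCap p ϑ K Ω := by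
  have hϑm : AEMeasurable ϑ (volume : Measure (EuclideanSpace ℝ (Fin n))) :=
    hϑloc.aestronglyMeasurable.aemeasurable
  have hϑnn : ∀ x, 0 ≤ ϑ x := fun x => (hϑpos x).le
  obtain ⟨C, hC⟩ := hpb
  have hple : ∀ᵐ x ∂(volume : Measure (EuclideanSpace ℝ (Fin n))), p x ≤ C :=
    Filter.eventually_map.1 hC
  have h1p : ∀ᵐ x ∂(volume : Measure (EuclideanSpace ℝ (Fin n))), 1 ≤ p x := by
    unfold essInf at hpm
    rw [Filter.liminf_eq] at hpm
    by_cases hne : {a : ℝ | ∀ᶠ x in ae (volume : Measure (EuclideanSpace ℝ (Fin n))), a ≤ p x}.Nonempty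
    · by_cases hbdd : BddAbove {a : ℝ | ∀ᶠ x in ae (volume : Measure (EuclideanSpace ℝ (Fin n))), a ≤ p x}
      · obtain ⟨a, haS, h1a⟩ := exists_lt_of_lt_csSup hne hpm
        have haS' : ∀ᵐ x ∂(volume : Measure (EuclideanSpace ℝ (Fin n))), a ≤ p x := haS
        exact haS'.mono fun x hx => le_trans h1a.le hx
      · rw [Real.sSup_of_not_bddAbove hbdd] at hpm
        linarith
    · rw [Set.not_nonempty_iff_eq_empty.1 hne, Real.sSup_empty] at hpm
      linarith
  have hae : ∀ᵐ x ∂(volume : Measure (EuclideanSpace ℝ (Fin n))), 1 ≤ p x ∧ p x ≤ max C 1 := by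
    filter_upwards [h1p, hple] with x h1 h2
    exact ⟨h1, h2.trans (le_max_left _ _)⟩
  constructor
  · rfl
  · apply le_antisymm
    · by_contra hlt
      push_neg at hlt
      obtain ⟨t, ht1, ht2⟩ := exists_between hlt
      obtain ⟨K, hKc, hKA, hKcap⟩ := exists_compact_le hp hae hϑm hϑnn hA hAΩ ht2 ht2.ne_top
      have hle2 : relCap p ϑ K Ω ≤
          ⨆ (K : Set (EuclideanSpace ℝ (Fin n))) (_ : IsCompact K ∧ K ⊆ A), relCap p ϑ K Ω :=
        le_iSup₂ (f := fun K (_ : IsCompact K ∧ K ⊆ A) => relCap p ϑ K Ω) K ⟨hKc, hKA⟩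
      exact absurd (hKcap.trans hle2) (not_le.2 ht1)
    · exact iSup₂_le fun K hK => relCap_mono hK.2


end
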